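/- (Lemma 1.1.) Let U ⊆ ℝⁿ be open, ρ : U → ℝⁿ a covector field and H : U → Matrix (Fin n) (Fin n) ℝ a C^∞ matrix field. Then for every x ∈ U and all u, v ∈ ℝⁿ: d(ρ∘H)(x)(H(x)u, v) + d(ρ∘H)(x)(u, H(x)v) = dρ(x)(H(x)u, H(x)v) + d(ρ∘H²)(x)(u, v) + ⟨ρ(x), N_H(x)(u,v)⟩, where ρ∘H² denotes the covector field x ↦ (H(x)²)ᵀ·ρ(x). -/

import Mathlib

open Matrix

/-- Directional derivative of a matrix field, entrywise. -/
noncomputable def matDirDeriv {d n : ℕ} (G : (Fin d → ℝ) → Matrix (Fin n) (Fin n) ℝ)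
    (x w : Fin d → ℝ) : Matrix (Fin n) (Fin n) ℝ :=
  Matrix.of fun i j => fderiv ℝ (fun y => G y i j) x w

/-- The Nijenhuis torsion of a matrix field `G` on an open subset of `ℝⁿ`:
`N_G(x)(u,v) = (DG(x)(G(x)u))·v − (DG(x)(G(x)v))·u + G(x)·((DG(x)v)·u) − G(x)·((DG(x)u)·v)`. -/
noncomputable def nijenhuis {n : ℕ} (G : (Fin n → ℝ) → Matrix (Fin n) (Fin n) ℝ)
    (x u v : Fin n → ℝ) : Fin n → ℝ :=
  (matDirDeriv G x ((G x).mulVec u)).mulVec v - (matDirDeriv G x ((G x).mulVec v)).mulVec u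
    + (G x).mulVec ((matDirDeriv G x v).mulVec u) - (G x).mulVec ((matDirDeriv G x u).mulVec v)

/-- Exterior derivative of a covector field: `dρ(x)(u,v) = ⟨Dρ(x)u, v⟩ − ⟨Dρ(x)v, u⟩`. -/
noncomputable def covExtDeriv {n : ℕ} (ρ : (Fin n → ℝ) → (Fin n → ℝ))
    (x u v : Fin n → ℝ) : ℝ :=
  (fderiv ℝ ρ x u) ⬝ᵥ v - (fderiv ℝ ρ x v) ⬝ᵥ u


lemma fderiv_comp_proj {n : ℕ} (ρ : (Fin n → ℝ) → (Fin n → ℝ)) (x : Fin n → ℝ)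
    (hρd : DifferentiableAt ℝ ρ x) (j : Fin n) (w : Fin n → ℝ) :
    fderiv ℝ (fun y => ρ y j) x w = fderiv ℝ ρ x w j := by
  have : (fun y => ρ y j) = (ContinuousLinearMap.proj (R := ℝ) j : (Fin n → ℝ) →L[ℝ] ℝ) ∘ ρ := rfl
  rw [this, fderiv_comp x (ContinuousLinearMap.differentiableAt _) hρd]
  simp

lemma fderiv_tmv {n : ℕ} (G : (Fin n → ℝ) → Matrix (Fin n) (Fin n) ℝ)
    (ρ : (Fin n → ℝ) → (Fin n → ℝ)) (x : Fin n → ℝ)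
    (hG : ∀ i j, DifferentiableAt ℝ (fun y => G y i j) x)
    (hρd : DifferentiableAt ℝ ρ x) (w : Fin n → ℝ) :
    fderiv ℝ (fun y => (G y)ᵀ.mulVec (ρ y)) x w
      = (matDirDeriv G x w)ᵀ.mulVec (ρ x) + (G x)ᵀ.mulVec (fderiv ℝ ρ x w) := by
  have hcomp : ∀ i : Fin n, (fun y => ((G y)ᵀ.mulVec (ρ y)) i)
      = fun y => ∑ j, G y j i * ρ y j := by
    intro i; funext y; simp [Matrix.mulVec, dotProduct, Matrix.transpose_apply]
  have hρdj : ∀ j, DifferentiableAt ℝ (fun y => ρ y j) x := fun j =>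
    (differentiableAt_pi.1 hρd) j
  have hdF : ∀ i : Fin n, DifferentiableAt ℝ (fun y => ((G y)ᵀ.mulVec (ρ y)) i) x := by
    intro i; rw [hcomp i]
    exact DifferentiableAt.fun_sum fun j _ => (hG j i).mul (hρdj j)
  rw [fderiv_pi hdF]
  funext i
  simp only [ContinuousLinearMap.pi_apply]
  rw [hcomp i]
  rw [fderiv_fun_sum (A := fun j y => G y j i * ρ y j) (fun j _ => (hG j i).mul (hρdj j))]
  simp only [ContinuousLinearMap.sum_apply]
  have : ∀ j : Fin n, fderiv ℝ (fun y => G y j i * ρ y j) x w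
      = matDirDeriv G x w j i * ρ x j + G x j i * fderiv ℝ ρ x w j := by
    intro j
    rw [fderiv_fun_mul (hG j i) (hρdj j)]
    simp [matDirDeriv, fderiv_comp_proj ρ x hρd j w]; ring
  rw [Finset.sum_congr rfl fun j _ => this j]
  simp [Matrix.mulVec, dotProduct, Finset.sum_add_distrib, Matrix.transpose_apply]

lemma matDirDeriv_mul {n : ℕ} (H : (Fin n → ℝ) → Matrix (Fin n) (Fin n) ℝ) (x : Fin n → ℝ)
    (hH : ∀ i j, DifferentiableAt ℝ (fun y => H y i j) x) (w : Fin n → ℝ) :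
    matDirDeriv (fun y => H y * H y) x w
      = matDirDeriv H x w * H x + H x * matDirDeriv H x w := by
  ext i j
  have h1 : (fun y => (H y * H y) i j) = fun y => ∑ k, H y i k * H y k j := by
    funext y; simp [Matrix.mul_apply]
  simp only [matDirDeriv, Matrix.of_apply, Matrix.add_apply, Matrix.mul_apply, h1]
  rw [fderiv_fun_sum (A := fun k y => H y i k * H y k j) (fun k _ => (hH i k).mul (hH k j))]
  simp only [ContinuousLinearMap.sum_apply]
  rw [← Finset.sum_add_distrib]
  refine Finset.sum_congr rfl fun k _ => ?_
  rw [fderiv_fun_mul (hH i k) (hH k j)]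
  simp; ring

/-- Lemma 1.1: for a 1-form `ρ` and a (1,1)-tensor field `H`,
`d(ρ∘H)(Hu,v) + d(ρ∘H)(u,Hv) = dρ(Hu,Hv) + d(ρ∘H²)(u,v) + ρ(N_H(u,v))`. -/
theorem lemma_1_1 {n : ℕ} (U : Set (Fin n → ℝ)) (hU : IsOpen U)
    (ρ : (Fin n → ℝ) → (Fin n → ℝ)) (H : (Fin n → ℝ) → Matrix (Fin n) (Fin n) ℝ)
    (hρ : ContDiffOn ℝ (⊤ : ℕ∞) ρ U)
    (hH : ∀ i j, ContDiffOn ℝ (⊤ : ℕ∞) (fun y => H y i j) U) :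
    ∀ x ∈ U, ∀ u v : Fin n → ℝ,
      covExtDeriv (fun y => (H y)ᵀ.mulVec (ρ y)) x ((H x).mulVec u) v
        + covExtDeriv (fun y => (H y)ᵀ.mulVec (ρ y)) x u ((H x).mulVec v)
      = covExtDeriv ρ x ((H x).mulVec u) ((H x).mulVec v)
        + covExtDeriv (fun y => ((H y * H y)ᵀ).mulVec (ρ y)) x u v
        + ρ x ⬝ᵥ nijenhuis H x u v := by
  intro x hx u v
  have hxU : U ∈ nhds x := hU.mem_nhds hx
  have hρd : DifferentiableAt ℝ ρ x := (hρ.differentiableOn (by simp)).differentiableAt hxU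
  have hHd : ∀ i j, DifferentiableAt ℝ (fun y => H y i j) x := fun i j =>
    ((hH i j).differentiableOn (by simp)).differentiableAt hxU
  have hH2d : ∀ i j, DifferentiableAt ℝ (fun y => (H y * H y) i j) x := by
    intro i j
    have h1 : (fun y => (H y * H y) i j) = fun y => ∑ k, H y i k * H y k j := by
      funext y; simp [Matrix.mul_apply]
    rw [h1]
    exact DifferentiableAt.fun_sum fun k _ => (hHd i k).mul (hHd k j)
  have e1 := fderiv_tmv H ρ x hHd hρd
  have e2 := fderiv_tmv (fun y => H y * H y) ρ x hH2d hρd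
  simp only [covExtDeriv, nijenhuis, e1, e2, matDirDeriv_mul H x hHd]
  simp only [Matrix.transpose_add, Matrix.add_mulVec, Matrix.mulVec_transpose,
    add_dotProduct, Matrix.add_vecMul, dotProduct_add, dotProduct_sub,
    Matrix.dotProduct_mulVec, ← Matrix.vecMul_vecMul]
  ring
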